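/- arXiv:2603.03720 — 3 statements merged into one kernel-verified Lean document; each statement's English description precedes it below -/
import Mathlib

section
/- Let T > 0 and α₁, α₂ ∈ (0,2] with max{α₁,α₂} > 1. For every nonzero z ∈ ℂ with arg z ∈ [-3π/4, 3π/4], one has Re(Φ(z)) ≥ −(√2/2) · |Φ(z)| (equivalently, cos(arg Φ(z)) ≥ −√2/2). -/
open MeasureTheory

/-- `Φ(z) = ∫_ℝ 1/(z + T|v|^{α₁} + T|v|^{α₂}) dv`. -/
noncomputable def Phi (T α₁ α₂ : ℝ) (z : ℂ) : ℂ :=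
  ∫ v : ℝ, (z + ((T * |v| ^ α₁ + T * |v| ^ α₂ : ℝ) : ℂ))⁻¹

/-- algebraic lemma: if `b ≤ 0` and `b ≤ a` then `-(√2/2)√(a²+b²) ≤ a`. -/
lemma aux_alg (a b : ℝ) (hb : b ≤ 0) (hba : b ≤ a) :
    -(Real.sqrt 2 / 2) * Real.sqrt (a ^ 2 + b ^ 2) ≤ a := by
  have hs : Real.sqrt (a ^ 2 + b ^ 2) ^ 2 = a ^ 2 + b ^ 2 :=
    Real.sq_sqrt (by positivity)
  have hs0 : 0 ≤ Real.sqrt (a ^ 2 + b ^ 2) := Real.sqrt_nonneg _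
  have ht : Real.sqrt 2 ^ 2 = 2 := Real.sq_sqrt (by norm_num)
  have ht0 : 0 ≤ Real.sqrt 2 := Real.sqrt_nonneg _
  rcases le_or_gt 0 a with ha | ha
  · nlinarith [mul_nonneg ht0 hs0]
  · nlinarith [sq_nonneg (Real.sqrt 2 * Real.sqrt (a ^ 2 + b ^ 2) + 2 * a),
      mul_nonneg ht0 hs0, sq_nonneg (a - b), sq_nonneg (a + b)]

/-- key lemma for the upper half plane. -/
lemma key_lemma (T α₁ α₂ : ℝ) (hT : 0 < T) (z : ℂ)
    (hIm : 0 ≤ z.im) (hRe : 0 ≤ z.re + z.im) :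
    -(Real.sqrt 2 / 2) * ‖Phi T α₁ α₂ z‖ ≤ (Phi T α₁ α₂ z).re := by
  set f : ℝ → ℂ := fun v => (z + ((T * |v| ^ α₁ + T * |v| ^ α₂ : ℝ) : ℂ))⁻¹ with hf
  have hc : ∀ v : ℝ, (0 : ℝ) ≤ T * |v| ^ α₁ + T * |v| ^ α₂ := by
    intro v
    have h1 : (0:ℝ) ≤ |v| ^ α₁ := Real.rpow_nonneg (abs_nonneg v) _
    have h2 : (0:ℝ) ≤ |v| ^ α₂ := Real.rpow_nonneg (abs_nonneg v) _
    nlinarith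
  -- pointwise facts
  have him : ∀ v : ℝ, (f v).im ≤ 0 := by
    intro v
    simp only [hf, Complex.inv_im, Complex.add_im, Complex.ofReal_im, add_zero]
    apply div_nonpos_of_nonpos_of_nonneg
    · linarith
    · exact Complex.normSq_nonneg _
  have hrei : ∀ v : ℝ, (f v).im ≤ (f v).re := by
    intro v
    have hnsq : 0 ≤ Complex.normSq (z + ((T * |v| ^ α₁ + T * |v| ^ α₂ : ℝ) : ℂ)) :=
      Complex.normSq_nonneg _
    simp only [hf, Complex.inv_im, Complex.inv_re, Complex.add_im, Complex.add_re,
      Complex.ofReal_im, Complex.ofReal_re, add_zero]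
    rcases hnsq.eq_or_lt with h | h
    · rw [← h]; simp
    · rw [div_le_div_iff_of_pos_right h]
      have := hc v
      linarith
  -- main argument
  have habs : ‖Phi T α₁ α₂ z‖ =
      Real.sqrt ((Phi T α₁ α₂ z).re ^ 2 + (Phi T α₁ α₂ z).im ^ 2) := by
    rw [Complex.norm_def, Complex.normSq_apply]; ring_nf
  by_cases hint : Integrable f volume
  · have hPhi_im : (Phi T α₁ α₂ z).im = ∫ v, (f v).im := by
      rw [Phi]; exact (Complex.imCLM.integral_comp_comm hint).symm
    have hPhi_re : (Phi T α₁ α₂ z).re = ∫ v, (f v).re := by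
      rw [Phi]; exact (Complex.reCLM.integral_comp_comm hint).symm
    have hIm0 : (Phi T α₁ α₂ z).im ≤ 0 := by
      rw [hPhi_im]
      exact integral_nonpos fun v => him v
    have hsub : (Phi T α₁ α₂ z).im ≤ (Phi T α₁ α₂ z).re := by
      rw [hPhi_im, hPhi_re]
      exact integral_mono hint.im hint.re fun v => hrei v
    rw [habs]
    exact aux_alg _ _ hIm0 hsub
  · have : Phi T α₁ α₂ z = 0 := integral_undef hint
    rw [this]; simp

lemma conj_phi (T α₁ α₂ : ℝ) (z : ℂ) :
    Phi T α₁ α₂ ((starRingEnd ℂ) z) = (starRingEnd ℂ) (Phi T α₁ α₂ z) := by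
  rw [Phi, Phi, ← integral_conj]
  congr 1
  funext v
  rw [map_inv₀, map_add, Complex.conj_ofReal]

lemma re_add_abs_im (z : ℂ) (hz : z ≠ 0)
    (harg : z.arg ∈ Set.Icc (-(3 * Real.pi / 4)) (3 * Real.pi / 4)) :
    0 ≤ z.re + |z.im| := by
  have hpi : (0:ℝ) < Real.pi := Real.pi_pos
  obtain ⟨hl, hr⟩ := harg
  have habs : |z.arg| ≤ 3 * Real.pi / 4 := abs_le.mpr ⟨by linarith, hr⟩
  have hcos : Real.cos z.arg = z.re / ‖z‖ := Complex.cos_arg hz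
  have hsin : Real.sin z.arg = z.im / ‖z‖ := Complex.sin_arg z
  have habs0 : (0:ℝ) < ‖z‖ := by
    simpa [norm_pos_iff] using hz
  have key : 0 ≤ Real.cos z.arg + |Real.sin z.arg| := by
    set θ := |z.arg| with hθ
    have hθ0 : 0 ≤ θ := abs_nonneg _
    have hcoseq : Real.cos z.arg = Real.cos θ := (Real.cos_abs z.arg).symm
    have hsineq : |Real.sin z.arg| = Real.sin θ := by
      rcases le_or_gt 0 z.arg with h | h
      · have hθe : θ = z.arg := abs_of_nonneg h
        rw [hθe, abs_of_nonneg (Real.sin_nonneg_of_nonneg_of_le_pi h (by linarith))]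
      · have hθe : θ = -z.arg := abs_of_neg h
        rw [hθe, Real.sin_neg,
          abs_of_nonpos (Real.sin_nonpos_of_nonpos_of_neg_pi_le h.le (by linarith))]
    rw [hcoseq, hsineq]
    rcases le_or_gt θ (Real.pi / 2) with h | h
    · have h1 : 0 ≤ Real.cos θ := Real.cos_nonneg_of_mem_Icc ⟨by linarith, h⟩
      have h2 : 0 ≤ Real.sin θ := Real.sin_nonneg_of_nonneg_of_le_pi hθ0 (by linarith)
      linarith
    · have hθle : θ ≤ 3 * Real.pi / 4 := habs
      have h1 : Real.cos (3 * Real.pi / 4) ≤ Real.cos θ :=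
        Real.cos_le_cos_of_nonneg_of_le_pi hθ0 (by linarith) hθle
      have h2 : Real.sqrt 2 / 2 ≤ Real.sin θ := by
        have : Real.sin θ = Real.cos (Real.pi / 2 - θ) := (Real.cos_pi_div_two_sub θ).symm
        rw [this, ← Real.cos_neg]
        have heq : -(Real.pi / 2 - θ) = θ - Real.pi / 2 := by ring
        rw [heq]
        have := Real.cos_le_cos_of_nonneg_of_le_pi (by linarith : (0:ℝ) ≤ θ - Real.pi/2)
          (by linarith : Real.pi / 4 ≤ Real.pi) (by linarith : θ - Real.pi/2 ≤ Real.pi/4)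
        calc Real.sqrt 2 / 2 = Real.cos (Real.pi / 4) := by
              rw [Real.cos_pi_div_four]
          _ ≤ Real.cos (θ - Real.pi / 2) := this
      have h3 : Real.cos (3 * Real.pi / 4) = -(Real.sqrt 2 / 2) := by
        have : (3:ℝ) * Real.pi / 4 = Real.pi - Real.pi / 4 := by ring
        rw [this, Real.cos_pi_sub, Real.cos_pi_div_four]
      linarith
  have : z.re + |z.im| = ‖z‖ * (Real.cos z.arg + |Real.sin z.arg|) := by
    rw [hcos, hsin, abs_div, abs_of_pos habs0]
    field_simp
  rw [this]
  positivity

theorem stmt_10 (T α₁ α₂ : ℝ) (hT : 0 < T)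
    (h1 : α₁ ∈ Set.Ioc (0 : ℝ) 2) (h2 : α₂ ∈ Set.Ioc (0 : ℝ) 2) (hmax : 1 < max α₁ α₂)
    (z : ℂ) (hz : z ≠ 0)
    (harg : z.arg ∈ Set.Icc (-(3 * Real.pi / 4)) (3 * Real.pi / 4)) :
    -(Real.sqrt 2 / 2) * ‖Phi T α₁ α₂ z‖ ≤ (Phi T α₁ α₂ z).re := by
  have hre := re_add_abs_im z hz harg
  rcases le_or_gt 0 z.im with him | him
  · exact key_lemma T α₁ α₂ hT z him (by rwa [abs_of_nonneg him] at hre)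
  · have hw : -(Real.sqrt 2 / 2) * ‖Phi T α₁ α₂ ((starRingEnd ℂ) z)‖ ≤
        (Phi T α₁ α₂ ((starRingEnd ℂ) z)).re := by
      apply key_lemma T α₁ α₂ hT
      · simp only [Complex.conj_im]; linarith
      · simp only [Complex.conj_re, Complex.conj_im]
        rwa [abs_of_neg him] at hre
    rwa [conj_phi, Complex.norm_conj, Complex.conj_re] at hw
end

section
/- Let T > 0 and α₁, α₂ ∈ (0,2] with min{α₁,α₂} < 1 and max{α₁,α₂} > 1, and let t ∈ [-3π/4, 3π/4]. Then lim_{R→0+} Φ(R e^{it}) = ∫_ℝ 1/(T|v|^{α₁} + T|v|^{α₂}) dv, where the limit is taken in ℂ. -/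
open MeasureTheory Filter Set


lemma integrable_aux (T a b : ℝ) (hT : 0 < T) (ha0 : 0 < a) (ha : a < 1) (hb : 1 < b) :
    Integrable (fun v : ℝ => (T * |v| ^ a + T * |v| ^ b)⁻¹) := by
  have hmeas : Measurable (fun v : ℝ => (T * |v| ^ a + T * |v| ^ b)⁻¹) := by fun_prop
  have hb0 : 0 < b := lt_trans one_pos hb
  -- integrable on Ioc 0 1
  have h1 : IntegrableOn (fun v : ℝ => (T * |v| ^ a + T * |v| ^ b)⁻¹) (Ioc 0 1) := by
    have hdom : IntegrableOn (fun v : ℝ => T⁻¹ * v ^ (-a)) (Ioc 0 1) := by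
      have := (intervalIntegral.intervalIntegrable_rpow' (r := -a) (by linarith) (a := 0) (b := 1))
      rw [intervalIntegrable_iff_integrableOn_Ioc_of_le (by norm_num)] at this
      exact this.const_mul _
    refine Integrable.mono' hdom (hmeas.aestronglyMeasurable.restrict) ?_
    rw [ae_restrict_iff' measurableSet_Ioc]
    filter_upwards with v hv
    have hv0 : 0 < v := hv.1
    have habs : |v| = v := abs_of_pos hv0
    have hpa : 0 < T * v ^ a := mul_pos hT (Real.rpow_pos_of_pos hv0 a)
    have hpb : 0 ≤ T * v ^ b := le_of_lt (mul_pos hT (Real.rpow_pos_of_pos hv0 b))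
    rw [habs, Real.norm_eq_abs, abs_of_nonneg (inv_nonneg.mpr (by linarith))]
    rw [Real.rpow_neg hv0.le, ← mul_inv]
    exact inv_anti₀ hpa (by linarith)
  -- integrable on Ioi 1
  have h2 : IntegrableOn (fun v : ℝ => (T * |v| ^ a + T * |v| ^ b)⁻¹) (Ioi 1) := by
    have hdom : IntegrableOn (fun v : ℝ => T⁻¹ * v ^ (-b)) (Ioi 1) := by
      exact ((integrableOn_Ioi_rpow_iff one_pos).mpr (by linarith)).const_mul _
    refine Integrable.mono' hdom (hmeas.aestronglyMeasurable.restrict) ?_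
    rw [ae_restrict_iff' measurableSet_Ioi]
    filter_upwards with v hv
    have hv0 : (0:ℝ) < v := lt_trans one_pos hv
    have habs : |v| = v := abs_of_pos hv0
    have hpb : 0 < T * v ^ b := mul_pos hT (Real.rpow_pos_of_pos hv0 b)
    have hpa : 0 ≤ T * v ^ a := le_of_lt (mul_pos hT (Real.rpow_pos_of_pos hv0 a))
    rw [habs, Real.norm_eq_abs, abs_of_nonneg (inv_nonneg.mpr (by linarith))]
    rw [Real.rpow_neg hv0.le, ← mul_inv]
    exact inv_anti₀ hpb (by linarith)
  have hIoi : IntegrableOn (fun v : ℝ => (T * |v| ^ a + T * |v| ^ b)⁻¹) (Ioi 0) := by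
    have : Ioi (0:ℝ) = Ioc 0 1 ∪ Ioi 1 := by
      rw [Ioc_union_Ioi_eq_Ioi]; norm_num
    rw [this]; exact h1.union h2
  have hIic : IntegrableOn (fun v : ℝ => (T * |v| ^ a + T * |v| ^ b)⁻¹) (Iic 0) := by
    rw [← Measure.map_neg_eq_self (volume : Measure ℝ)]
    have m : MeasurableEmbedding fun x : ℝ => -x := (Homeomorph.neg ℝ).measurableEmbedding
    rw [m.integrableOn_map_iff]
    simp_rw [Function.comp_def, abs_neg, neg_preimage, neg_Iic, neg_zero]
    exact Iff.mpr integrableOn_Ici_iff_integrableOn_Ioi hIoi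
  have : IntegrableOn (fun v : ℝ => (T * |v| ^ a + T * |v| ^ b)⁻¹) (Iic 0 ∪ Ioi 0) :=
    hIic.union hIoi
  rwa [Iic_union_Ioi, integrableOn_univ] at this


lemma key_bound (a R t : ℝ) (ha : 0 < a) (hR : 0 ≤ R) (ht : |t| ≤ 3 * Real.pi / 4) :
    ‖((R : ℂ) * Complex.exp (t * Complex.I) + (a : ℂ))⁻¹‖ ≤ Real.sqrt 2 * a⁻¹ := by
  have hs2 : Real.sqrt 2 ^ 2 = 2 := Real.sq_sqrt (by norm_num)
  have hs2pos : 0 < Real.sqrt 2 := Real.sqrt_pos.mpr (by norm_num)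
  have hcos : -(Real.sqrt 2 / 2) ≤ Real.cos t := by
    have h34 : Real.cos (3 * Real.pi / 4) = -(Real.sqrt 2 / 2) := by
      have : 3 * Real.pi / 4 = Real.pi - Real.pi / 4 := by ring
      rw [this, Real.cos_pi_sub, Real.cos_pi_div_four]
    calc -(Real.sqrt 2 / 2) = Real.cos (3 * Real.pi / 4) := h34.symm
      _ ≤ Real.cos |t| := Real.cos_le_cos_of_nonneg_of_le_pi (abs_nonneg t)
          (by linarith [Real.pi_pos]) ht
      _ = Real.cos t := Real.cos_abs t
  have hw : ((R : ℂ) * Complex.exp (t * Complex.I) + (a : ℂ)) =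
      ((R * Real.cos t + a : ℝ) : ℂ) + ((R * Real.sin t : ℝ) : ℂ) * Complex.I := by
    rw [Complex.exp_mul_I]
    push_cast [Complex.ofReal_cos, Complex.ofReal_sin]
    ring
  have habs2 : ‖((R : ℂ) * Complex.exp (t * Complex.I) + (a : ℂ))‖ ^ 2
      = R ^ 2 + 2 * a * R * Real.cos t + a ^ 2 := by
    rw [hw, Complex.sq_norm, Complex.normSq_add_mul_I]
    have := Real.sin_sq_add_cos_sq t
    ring_nf
    nlinarith [Real.sin_sq_add_cos_sq t]
  have hlow : (a / Real.sqrt 2) ^ 2 ≤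
      ‖((R : ℂ) * Complex.exp (t * Complex.I) + (a : ℂ))‖ ^ 2 := by
    rw [habs2, div_pow, hs2]
    nlinarith [sq_nonneg (R * Real.sqrt 2 - a), mul_nonneg (mul_nonneg ha.le hR) hs2pos.le,
      mul_le_mul_of_nonneg_left hcos (mul_nonneg (by linarith : (0:ℝ) ≤ 2 * a) hR)]
  have hle : a / Real.sqrt 2 ≤ ‖((R : ℂ) * Complex.exp (t * Complex.I) + (a : ℂ))‖ :=
    le_of_pow_le_pow_left₀ two_ne_zero (norm_nonneg _) hlow
  have hpos : 0 < a / Real.sqrt 2 := div_pos ha hs2pos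
  rw [norm_inv]
  calc ‖((R : ℂ) * Complex.exp (t * Complex.I) + (a : ℂ))‖⁻¹
      ≤ (a / Real.sqrt 2)⁻¹ := inv_anti₀ hpos hle
    _ = Real.sqrt 2 * a⁻¹ := by rw [inv_div]; ring

theorem stmt_13 (T α₁ α₂ : ℝ) (hT : 0 < T)
    (h1 : α₁ ∈ Set.Ioc (0 : ℝ) 2) (h2 : α₂ ∈ Set.Ioc (0 : ℝ) 2)
    (hmin : min α₁ α₂ < 1) (hmax : 1 < max α₁ α₂)
    (t : ℝ) (ht : t ∈ Set.Icc (-(3 * Real.pi / 4)) (3 * Real.pi / 4)) :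
    Tendsto (fun R : ℝ => Phi T α₁ α₂ (R * Complex.exp (t * Complex.I)))
      (nhdsWithin 0 (Set.Ioi 0))
      (nhds (((∫ v : ℝ, 1 / (T * |v| ^ α₁ + T * |v| ^ α₂) : ℝ) : ℂ))) := by
  set g : ℝ → ℝ := fun v => T * |v| ^ α₁ + T * |v| ^ α₂ with hg
  have hgpos : ∀ v : ℝ, v ≠ 0 → 0 < g v := by
    intro v hv
    have h0 : 0 < |v| := abs_pos.mpr hv
    exact add_pos (mul_pos hT (Real.rpow_pos_of_pos h0 α₁))
      (mul_pos hT (Real.rpow_pos_of_pos h0 α₂))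
  have hgmeas : Measurable g := by fun_prop
  have integ : Integrable (fun v : ℝ => (g v)⁻¹) := by
    rcases le_total α₁ α₂ with h | h
    · have := integrable_aux T α₁ α₂ hT h1.1 (by simpa [min_eq_left h] using hmin)
        (by simpa [max_eq_right h] using hmax)
      exact this
    · have := integrable_aux T α₂ α₁ hT h2.1 (by simpa [min_eq_right h] using hmin)
        (by simpa [max_eq_left h] using hmax)
      simpa [hg, add_comm] using this
  have htabs : |t| ≤ 3 * Real.pi / 4 := abs_le.mpr ⟨ht.1, ht.2⟩
  have key : ((∫ v : ℝ, 1 / (T * |v| ^ α₁ + T * |v| ^ α₂) : ℝ) : ℂ)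
      = ∫ v : ℝ, ((1 / g v : ℝ) : ℂ) := (integral_ofReal).symm
  rw [key]
  unfold Phi
  have hae : ∀ᵐ v : ℝ, v ≠ 0 := by
    refine ae_iff.mpr ?_
    have h0 : {v : ℝ | ¬ v ≠ 0} = {(0:ℝ)} := by ext v; simp
    rw [h0]; exact measure_singleton 0
  refine tendsto_integral_filter_of_dominated_convergence
    (fun v => Real.sqrt 2 * (g v)⁻¹) ?_ ?_ (integ.const_mul _) ?_
  · filter_upwards with R
    exact ((measurable_const.add (Complex.measurable_ofReal.comp hgmeas)).inv).aestronglyMeasurable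
  · filter_upwards [self_mem_nhdsWithin] with R hR
    filter_upwards [hae] with v hv
    exact key_bound (g v) R t (hgpos v hv) (le_of_lt hR) htabs
  · filter_upwards [hae] with v hv
    have hgne : (g v : ℂ) ≠ 0 := by
      exact_mod_cast ne_of_gt (hgpos v hv)
    have h1 : Tendsto (fun R : ℝ => (R : ℂ) * Complex.exp (t * Complex.I) + (g v : ℂ))
        (nhdsWithin 0 (Set.Ioi 0)) (nhds ((g v : ℂ))) := by
      have : Tendsto (fun R : ℝ => (R : ℂ)) (nhdsWithin 0 (Set.Ioi 0)) (nhds 0) :=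
        (Complex.continuous_ofReal.tendsto 0).mono_left nhdsWithin_le_nhds
      have := (this.mul_const (Complex.exp (t * Complex.I))).add_const ((g v : ℂ))
      simpa using this
    have := h1.inv₀ hgne
    convert this using 2
    push_cast
    rw [one_div]
end

section
/- Let T > 0, α₁, α₂ ∈ (0,2] with α* := max{α₁,α₂} > 1, λ > 0, and let z ∈ ℂ be nonzero with arg z ∈ [-3π/4, 3π/4]. Then |λ / (1 + λ T (2π)^{-1} Φ(z))| ≤ (32π/T) · (∫_ℝ 1/(1 + T|v|^{α₁} + T|v|^{α₂}) dv)^{-1} · (max{|z|, 1})^{1 − 1/α*}. -/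
open MeasureTheory

section auxlemmas
open Set

lemma even_integrable_aux {f : ℝ → ℝ} (hev : ∀ x, f (-x) = f x)
    (h : IntegrableOn f (Ici 0)) : Integrable f := by
  rw [← integrableOn_univ, ← @Iio_union_Ici _ _ (0 : ℝ), integrableOn_union]
  refine ⟨?_, h⟩
  rw [← (Measure.measurePreserving_neg (volume : Measure ℝ)).integrableOn_comp_preimage
      (Homeomorph.neg ℝ).measurableEmbedding]
  simp only [Function.comp_def, hev, neg_preimage, neg_Iio, neg_zero]
  exact h.mono_set Ioi_subset_Ici_self

lemma rpow_abs_max_le (α₁ α₂ : ℝ) (hα₁ : 0 < α₁) (hα₂ : 0 < α₂) (v : ℝ) :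
    |v| ^ (max α₁ α₂) ≤ |v| ^ α₁ + |v| ^ α₂ := by
  rcases max_cases α₁ α₂ with ⟨h, _⟩ | ⟨h, _⟩ <;> rw [h]
  · nlinarith [Real.rpow_nonneg (abs_nonneg v) α₂]
  · nlinarith [Real.rpow_nonneg (abs_nonneg v) α₁]

lemma den_pos (T α₁ α₂ r : ℝ) (hT : 0 < T) (hr : 0 < r) (v : ℝ) :
    0 < r + T * |v| ^ α₁ + T * |v| ^ α₂ := by
  have h1 := Real.rpow_nonneg (abs_nonneg v) α₁
  have h2 := Real.rpow_nonneg (abs_nonneg v) α₂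
  nlinarith

lemma cont_den (T α₁ α₂ r : ℝ) (hα₁ : 0 < α₁) (hα₂ : 0 < α₂) :
    Continuous fun v : ℝ => r + T * |v| ^ α₁ + T * |v| ^ α₂ := by
  have c1 : Continuous fun v : ℝ => |v| ^ α₁ :=
    continuous_abs.rpow_const fun v => Or.inr hα₁.le
  have c2 : Continuous fun v : ℝ => |v| ^ α₂ :=
    continuous_abs.rpow_const fun v => Or.inr hα₂.le
  continuity

lemma integrable_den (T α₁ α₂ r : ℝ) (hT : 0 < T) (hα₁ : 0 < α₁) (hα₂ : 0 < α₂)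
    (hmax : 1 < max α₁ α₂) (hr : 0 < r) :
    Integrable fun v : ℝ => (r + T * |v| ^ α₁ + T * |v| ^ α₂)⁻¹ := by
  set β := max α₁ α₂ with hβ
  have hcont : Continuous fun v : ℝ => (r + T * |v| ^ α₁ + T * |v| ^ α₂)⁻¹ :=
    (cont_den T α₁ α₂ r hα₁ hα₂).inv₀ fun v => (den_pos T α₁ α₂ r hT hr v).ne'
  apply even_integrable_aux (by intro x; simp [abs_neg])
  rw [← Icc_union_Ioi_eq_Ici (zero_le_one' ℝ), integrableOn_union]
  constructor
  · exact hcont.integrableOn_Icc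
  · have hmaj : IntegrableOn (fun v : ℝ => T⁻¹ * v ^ (-β)) (Ioi 1) :=
      (integrableOn_Ioi_rpow_of_lt (by linarith) one_pos).const_mul _
    apply Integrable.mono' hmaj (hcont.aestronglyMeasurable.restrict)
    filter_upwards [ae_restrict_mem measurableSet_Ioi] with v hv
    have hv1 : (1 : ℝ) < v := hv
    have hv0 : (0 : ℝ) < v := by linarith
    have hb : T * v ^ β ≤ r + T * |v| ^ α₁ + T * |v| ^ α₂ := by
      have := rpow_abs_max_le α₁ α₂ hα₁ hα₂ v
      rw [abs_of_pos hv0] at *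
      nlinarith
    have hTv : 0 < T * v ^ β := by positivity
    rw [Real.norm_eq_abs, abs_of_pos (inv_pos.2 (den_pos T α₁ α₂ r hT hr v)),
      Real.rpow_neg hv0.le, ← mul_inv]
    exact inv_anti₀ hTv hb

lemma J_mono (T α₁ α₂ r r' : ℝ) (hT : 0 < T) (hα₁ : 0 < α₁) (hα₂ : 0 < α₂)
    (hmax : 1 < max α₁ α₂) (hr : 0 < r) (hrr : r ≤ r') :
    (∫ v : ℝ, (r' + T * |v| ^ α₁ + T * |v| ^ α₂)⁻¹) ≤
      ∫ v : ℝ, (r + T * |v| ^ α₁ + T * |v| ^ α₂)⁻¹ := by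
  have hr' : 0 < r' := lt_of_lt_of_le hr hrr
  refine integral_mono (integrable_den T α₁ α₂ r' hT hα₁ hα₂ hmax hr')
    (integrable_den T α₁ α₂ r hT hα₁ hα₂ hmax hr) fun v => ?_
  have := den_pos T α₁ α₂ r hT hr v
  gcongr

lemma J_scale (T α₁ α₂ s : ℝ) (hT : 0 < T) (hα₁ : 0 < α₁) (hα₂ : 0 < α₂)
    (hα₁2 : α₁ ≤ 2) (hα₂2 : α₂ ≤ 2) (hmax : 1 < max α₁ α₂) (hs : 1 ≤ s) :
    s ^ ((max α₁ α₂)⁻¹ - 1) * (∫ v : ℝ, (1 + T * |v| ^ α₁ + T * |v| ^ α₂)⁻¹) ≤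
      ∫ v : ℝ, (s + T * |v| ^ α₁ + T * |v| ^ α₂)⁻¹ := by
  set β := max α₁ α₂ with hβ
  have hs0 : 0 < s := lt_of_lt_of_le one_pos hs
  have hβ0 : 0 < β := lt_trans one_pos hmax
  set a := s ^ (β⁻¹) with ha
  have ha0 : 0 < a := Real.rpow_pos_of_pos hs0 _
  have key : ∀ v : ℝ, s⁻¹ * (1 + T * |v| ^ α₁ + T * |v| ^ α₂)⁻¹ ≤
      (s + T * |a * v| ^ α₁ + T * |a * v| ^ α₂)⁻¹ := by
    intro v
    have habs : ∀ α, 0 < α → α ≤ β → T * |a * v| ^ α ≤ s * (T * |v| ^ α) := by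
      intro α hα hαβ
      have hexp : β⁻¹ * α ≤ 1 := by
        rw [← div_eq_inv_mul, div_le_one hβ0]
        exact hαβ
      have h1 : s ^ (β⁻¹ * α) ≤ s := by
        calc s ^ (β⁻¹ * α) ≤ s ^ (1 : ℝ) := Real.rpow_le_rpow_of_exponent_le hs hexp
          _ = s := Real.rpow_one s
      have h2 := Real.rpow_nonneg (abs_nonneg v) α
      rw [abs_mul, abs_of_pos ha0, Real.mul_rpow ha0.le (abs_nonneg v), ha,
        ← Real.rpow_mul hs0.le]
      nlinarith [mul_le_mul_of_nonneg_left (mul_le_mul_of_nonneg_right h1 h2) hT.le]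
    have h1 := habs α₁ hα₁ (le_max_left _ _)
    have h2 := habs α₂ hα₂ (le_max_right _ _)
    rw [← mul_inv]
    apply inv_anti₀ (den_pos T α₁ α₂ s hT hs0 (a * v))
    have hex : s * (1 + T * |v| ^ α₁ + T * |v| ^ α₂)
        = s + s * (T * |v| ^ α₁) + s * (T * |v| ^ α₂) := by ring
    rw [hex]
    linarith
  have hcv := MeasureTheory.Measure.integral_comp_mul_left
    (fun v : ℝ => (s + T * |v| ^ α₁ + T * |v| ^ α₂)⁻¹) a
  rw [abs_of_pos (inv_pos.2 ha0), smul_eq_mul] at hcv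
  have hIs := integrable_den T α₁ α₂ s hT hα₁ hα₂ hmax hs0
  have hI1 := integrable_den T α₁ α₂ 1 hT hα₁ hα₂ hmax one_pos
  have hmono : (∫ v : ℝ, s⁻¹ * (1 + T * |v| ^ α₁ + T * |v| ^ α₂)⁻¹) ≤
      ∫ v : ℝ, (s + T * |a * v| ^ α₁ + T * |a * v| ^ α₂)⁻¹ :=
    integral_mono (hI1.const_mul _) (hIs.comp_mul_left' ha0.ne') key
  rw [integral_const_mul] at hmono
  have hfinal : (∫ v : ℝ, (s + T * |a * v| ^ α₁ + T * |a * v| ^ α₂)⁻¹) =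
      a⁻¹ * ∫ v : ℝ, (s + T * |v| ^ α₁ + T * |v| ^ α₂)⁻¹ := hcv
  rw [hfinal] at hmono
  have hI1pos : 0 ≤ ∫ v : ℝ, (1 + T * |v| ^ α₁ + T * |v| ^ α₂)⁻¹ :=
    integral_nonneg fun v => (inv_pos.2 (den_pos T α₁ α₂ 1 hT one_pos v)).le
  have haa : s ^ (β⁻¹ - 1) = a * s⁻¹ := by
    rw [ha, ← Real.rpow_neg_one s, ← Real.rpow_add hs0, sub_eq_add_neg]
  rw [haa]
  calc a * s⁻¹ * (∫ v : ℝ, (1 + T * |v| ^ α₁ + T * |v| ^ α₂)⁻¹)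
      = a * (s⁻¹ * ∫ v : ℝ, (1 + T * |v| ^ α₁ + T * |v| ^ α₂)⁻¹) := by ring
    _ ≤ a * (a⁻¹ * ∫ v : ℝ, (s + T * |v| ^ α₁ + T * |v| ^ α₂)⁻¹) := by
        exact mul_le_mul_of_nonneg_left hmono ha0.le
    _ = ∫ v : ℝ, (s + T * |v| ^ α₁ + T * |v| ^ α₂)⁻¹ := by
        field_simp

lemma J_pos (T α₁ α₂ r : ℝ) (hT : 0 < T) (hα₁ : 0 < α₁) (hα₂ : 0 < α₂)
    (hmax : 1 < max α₁ α₂) (hr : 0 < r) :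
    0 < ∫ v : ℝ, (r + T * |v| ^ α₁ + T * |v| ^ α₂)⁻¹ := by
  rw [integral_pos_iff_support_of_nonneg_ae
    (Filter.Eventually.of_forall fun v => (inv_pos.2 (den_pos T α₁ α₂ r hT hr v)).le)
    (integrable_den T α₁ α₂ r hT hα₁ hα₂ hmax hr)]
  have : Function.support (fun v : ℝ => (r + T * |v| ^ α₁ + T * |v| ^ α₂)⁻¹) = Set.univ :=
    Set.eq_univ_of_forall fun v => (inv_pos.2 (den_pos T α₁ α₂ r hT hr v)).ne'
  rw [this]
  simp

lemma lem_A (z : ℂ) (hz : z ≠ 0) (t : ℝ) :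
    (Complex.exp ((z.arg / 2 : ℝ) * Complex.I) * ((starRingEnd ℂ) (z + (t : ℂ)))).re
      = (‖z‖ + t) * Real.cos (z.arg / 2) := by
  set θ := z.arg with hθ
  have hz_re : z.re = ‖z‖ * Real.cos θ := by
    rw [Complex.cos_arg hz]
    field_simp [norm_ne_zero_iff.mpr hz]
  have hz_im : z.im = ‖z‖ * Real.sin θ := by
    rw [Complex.sin_arg]
    field_simp [norm_ne_zero_iff.mpr hz]
  have trig := Real.cos_sub θ (θ / 2)
  rw [show θ - θ / 2 = θ / 2 by ring] at trig
  simp only [Complex.mul_re, Complex.conj_re, Complex.conj_im, Complex.add_re,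
    Complex.add_im, Complex.ofReal_re, Complex.ofReal_im,
    Complex.exp_ofReal_mul_I_re, Complex.exp_ofReal_mul_I_im, hz_re, hz_im]
  linear_combination (-(‖z‖)) * trig

lemma lem_B (z : ℂ) (hz : z ≠ 0) (t : ℝ) :
    (‖z‖ + t) * Real.cos (z.arg / 2) ≤ ‖z + (t : ℂ)‖ := by
  have h := Complex.re_le_norm
    (Complex.exp ((z.arg / 2 : ℝ) * Complex.I) * ((starRingEnd ℂ) (z + (t : ℂ))))
  rw [lem_A z hz t, norm_mul, Complex.norm_exp_ofReal_mul_I, Complex.norm_conj, one_mul] at h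
  exact h

lemma lem_C (z : ℂ) (hz : z ≠ 0) (t : ℝ) (ht : 0 ≤ t) (hc : 0 < Real.cos (z.arg / 2)) :
    Real.cos (z.arg / 2) * (‖z‖ + t)⁻¹ ≤
      (Complex.exp ((z.arg / 2 : ℝ) * Complex.I) * (z + (t : ℂ))⁻¹).re := by
  set R := ‖z‖ with hR
  have hRpos : 0 < R := norm_pos_iff.mpr hz
  have hRt : 0 < R + t := by linarith
  have hwlb := lem_B z hz t
  have hwpos : 0 < ‖z + (t : ℂ)‖ := lt_of_lt_of_le (by positivity) hwlb
  have hw0 : z + (t : ℂ) ≠ 0 := fun h => by simp [h] at hwpos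
  have hub : ‖z + (t : ℂ)‖ ≤ R + t := by
    calc ‖z + (t : ℂ)‖ ≤ R + ‖(t : ℂ)‖ := norm_add_le _ _
      _ = R + t := by rw [Complex.norm_real, Real.norm_eq_abs, abs_of_nonneg ht]
  have hre : (Complex.exp ((z.arg / 2 : ℝ) * Complex.I) * (z + (t : ℂ))⁻¹).re
      = (Complex.normSq (z + (t : ℂ)))⁻¹ * ((R + t) * Real.cos (z.arg / 2)) := by
    rw [Complex.inv_def]
    rw [show Complex.exp ((z.arg / 2 : ℝ) * Complex.I) *
        ((starRingEnd ℂ) (z + (t : ℂ)) * ((Complex.normSq (z + (t : ℂ)))⁻¹ : ℝ)) =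
        (((Complex.normSq (z + (t : ℂ)))⁻¹ : ℝ) : ℂ) *
        (Complex.exp ((z.arg / 2 : ℝ) * Complex.I) * (starRingEnd ℂ) (z + (t : ℂ))) by ring]
    rw [Complex.re_ofReal_mul, lem_A z hz t]
  rw [hre, Complex.normSq_eq_norm_sq]
  calc Real.cos (z.arg / 2) * (R + t)⁻¹
      = ((R + t) ^ 2)⁻¹ * ((R + t) * Real.cos (z.arg / 2)) := by
        field_simp
    _ ≤ (‖z + (t : ℂ)‖ ^ 2)⁻¹ * ((R + t) * Real.cos (z.arg / 2)) := by
        have hsq : ‖z + (t : ℂ)‖ ^ 2 ≤ (R + t) ^ 2 := by nlinarith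
        have : ((R + t) ^ 2)⁻¹ ≤ (‖z + (t : ℂ)‖ ^ 2)⁻¹ :=
          inv_anti₀ (by positivity) hsq
        exact mul_le_mul_of_nonneg_right this (by positivity)

lemma alg_aux (lam T pi P I : ℝ) (hlam : lam ≠ 0) (hT : T ≠ 0) (hpi : pi ≠ 0)
    (hP : P ≠ 0) (hI : I ≠ 0) :
    lam / (lam * T * (2 * pi)⁻¹ * (16⁻¹ * (P⁻¹ * I))) = 32 * pi / T * I⁻¹ * P := by
  field_simp
  ring

end auxlemmas

theorem stmt_17 (T α₁ α₂ lam : ℝ) (hT : 0 < T)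
    (h1 : α₁ ∈ Set.Ioc (0 : ℝ) 2) (h2 : α₂ ∈ Set.Ioc (0 : ℝ) 2) (hmax : 1 < max α₁ α₂)
    (hlam : 0 < lam) (z : ℂ) (hz : z ≠ 0)
    (harg : z.arg ∈ Set.Icc (-(3 * Real.pi / 4)) (3 * Real.pi / 4)) :
    ‖(lam : ℂ) / (1 + lam * T * (2 * Real.pi : ℝ)⁻¹ * Phi T α₁ α₂ z)‖ ≤
      32 * Real.pi / T * (∫ v : ℝ, 1 / (1 + T * |v| ^ α₁ + T * |v| ^ α₂))⁻¹ *
        max ‖z‖ 1 ^ (1 - 1 / max α₁ α₂) := by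
  obtain ⟨hα₁, hα₁2⟩ := h1
  obtain ⟨hα₂, hα₂2⟩ := h2
  have hπ3 := Real.pi_gt_three
  have hπ315 : Real.pi < 3.15 := Real.pi_lt_d2
  have hπ0 : (0 : ℝ) < Real.pi := by linarith
  have hβ0 : (0 : ℝ) < max α₁ α₂ := lt_trans one_pos hmax
  have hr : 0 < ‖z‖ := norm_pos_iff.mpr hz
  -- cosine bound
  have hθabs := abs_le.mpr ⟨harg.1, harg.2⟩
  have hcos16 : (16 : ℝ)⁻¹ ≤ Real.cos (z.arg / 2) := by
    have hb := Real.one_sub_sq_div_two_le_cos (x := z.arg / 2)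
    have h2' := abs_le.mp hθabs
    nlinarith [h2'.1, h2'.2]
  have hcpos : (0 : ℝ) < Real.cos (z.arg / 2) := lt_of_lt_of_le (by norm_num) hcos16
  have ht0 : ∀ v : ℝ, 0 ≤ T * |v| ^ α₁ + T * |v| ^ α₂ := by
    intro v
    have h1' := Real.rpow_nonneg (abs_nonneg v) α₁
    have h2' := Real.rpow_nonneg (abs_nonneg v) α₂
    nlinarith
  -- integrability of the complex integrand
  have hgcont : Continuous fun v : ℝ => (z + ((T * |v| ^ α₁ + T * |v| ^ α₂ : ℝ) : ℂ))⁻¹ := by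
    have hc : Continuous fun v : ℝ => (T * |v| ^ α₁ + T * |v| ^ α₂ : ℝ) := by
      have := cont_den T α₁ α₂ 0 hα₁ hα₂
      simpa using this
    apply Continuous.inv₀ (continuous_const.add (Complex.continuous_ofReal.comp hc))
    intro v
    have hlb := lem_B z hz (T * |v| ^ α₁ + T * |v| ^ α₂)
    have hpos : 0 < ‖z + ((T * |v| ^ α₁ + T * |v| ^ α₂ : ℝ) : ℂ)‖ := by
      refine lt_of_lt_of_le ?_ hlb
      have := ht0 v
      positivity
    intro hzero
    simp only [Pi.add_apply, Function.comp_apply] at hzero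
    rw [hzero, norm_zero] at hpos
    exact lt_irrefl _ hpos
  have hJr_int := integrable_den T α₁ α₂ (‖z‖) hT hα₁ hα₂ hmax hr
  have hgint : Integrable fun v : ℝ => (z + ((T * |v| ^ α₁ + T * |v| ^ α₂ : ℝ) : ℂ))⁻¹ := by
    apply Integrable.mono' (hJr_int.const_mul (Real.cos (z.arg / 2))⁻¹)
      hgcont.aestronglyMeasurable
    refine Filter.Eventually.of_forall fun v => ?_
    rw [norm_inv]
    have hlb := lem_B z hz (T * |v| ^ α₁ + T * |v| ^ α₂)
    have htv := ht0 v
    have hrt : 0 < ‖z‖ + (T * |v| ^ α₁ + T * |v| ^ α₂) := by linarith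
    have hpos : 0 < ‖z + ((T * |v| ^ α₁ + T * |v| ^ α₂ : ℝ) : ℂ)‖ :=
      lt_of_lt_of_le (by positivity) hlb
    rw [show (Real.cos (z.arg / 2))⁻¹ * (‖z‖ + T * |v| ^ α₁ + T * |v| ^ α₂)⁻¹
        = ((‖z‖ + (T * |v| ^ α₁ + T * |v| ^ α₂)) * Real.cos (z.arg / 2))⁻¹ by
      rw [mul_inv]; ring_nf]
    exact inv_anti₀ (by positivity) hlb
  -- lower bound for the real part of e * Phi
  have hre_ge : Real.cos (z.arg / 2) *
      (∫ v : ℝ, (‖z‖ + T * |v| ^ α₁ + T * |v| ^ α₂)⁻¹) ≤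
      (Complex.exp ((z.arg / 2 : ℝ) * Complex.I) * Phi T α₁ α₂ z).re := by
    have hPhi : Complex.exp ((z.arg / 2 : ℝ) * Complex.I) * Phi T α₁ α₂ z =
        ∫ v : ℝ, Complex.exp ((z.arg / 2 : ℝ) * Complex.I) *
          (z + ((T * |v| ^ α₁ + T * |v| ^ α₂ : ℝ) : ℂ))⁻¹ := by
      rw [Phi, ← integral_const_mul]
    have hint_e := hgint.const_mul (Complex.exp ((z.arg / 2 : ℝ) * Complex.I))
    have hre := integral_re (μ := (volume : MeasureTheory.Measure ℝ)) hint_e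
    simp only [RCLike.re_to_complex] at hre
    rw [hPhi, ← hre, ← integral_const_mul]
    refine integral_mono (hJr_int.const_mul _) hint_e.re fun v => ?_
    have := lem_C z hz (T * |v| ^ α₁ + T * |v| ^ α₂) (ht0 v) hcpos
    simpa [add_assoc] using this
  -- lower bounds for the integral
  have hM1 : (1 : ℝ) ≤ max ‖z‖ 1 := le_max_right _ _
  have hM0 : (0 : ℝ) < max ‖z‖ 1 := lt_of_lt_of_le one_pos hM1
  have hscale := J_scale T α₁ α₂ (max ‖z‖ 1) hT hα₁ hα₂ hα₁2 hα₂2 hmax hM1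
  have hmono := J_mono T α₁ α₂ (‖z‖) (max ‖z‖ 1) hT hα₁ hα₂ hmax hr
    (le_max_left _ _)
  have hI1pos := J_pos T α₁ α₂ 1 hT hα₁ hα₂ hmax one_pos
  have hJr_ge : max ‖z‖ 1 ^ ((max α₁ α₂)⁻¹ - 1) *
      (∫ v : ℝ, (1 + T * |v| ^ α₁ + T * |v| ^ α₂)⁻¹) ≤
      ∫ v : ℝ, (‖z‖ + T * |v| ^ α₁ + T * |v| ^ α₂)⁻¹ := le_trans hscale hmono
  have hJr_pos : 0 < ∫ v : ℝ, (‖z‖ + T * |v| ^ α₁ + T * |v| ^ α₂)⁻¹ :=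
    J_pos T α₁ α₂ (‖z‖) hT hα₁ hα₂ hmax hr
  -- the denominator
  have hk : (0 : ℝ) < lam * T * (2 * Real.pi)⁻¹ := by positivity
  have hcast : (lam : ℂ) * (T : ℂ) * (((2 * Real.pi : ℝ)⁻¹ : ℝ) : ℂ)
      = ((lam * T * (2 * Real.pi)⁻¹ : ℝ) : ℂ) := by push_cast; ring
  have habsD : lam * T * (2 * Real.pi)⁻¹ * (Real.cos (z.arg / 2) *
      ∫ v : ℝ, (‖z‖ + T * |v| ^ α₁ + T * |v| ^ α₂)⁻¹) ≤
      ‖1 + (lam : ℂ) * T * (((2 * Real.pi)⁻¹ : ℝ) : ℂ) * Phi T α₁ α₂ z‖ := by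
    have h1 := Complex.re_le_norm (Complex.exp ((z.arg / 2 : ℝ) * Complex.I) *
      (1 + (lam : ℂ) * T * (((2 * Real.pi)⁻¹ : ℝ) : ℂ) * Phi T α₁ α₂ z))
    rw [norm_mul, Complex.norm_exp_ofReal_mul_I, one_mul] at h1
    refine le_trans ?_ h1
    have hre : (Complex.exp ((z.arg / 2 : ℝ) * Complex.I) *
        (1 + (lam : ℂ) * T * (((2 * Real.pi)⁻¹ : ℝ) : ℂ) * Phi T α₁ α₂ z)).re
        = Real.cos (z.arg / 2) + (lam * T * (2 * Real.pi)⁻¹) *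
          (Complex.exp ((z.arg / 2 : ℝ) * Complex.I) * Phi T α₁ α₂ z).re := by
      rw [show Complex.exp ((z.arg / 2 : ℝ) * Complex.I) *
          (1 + (lam : ℂ) * T * (((2 * Real.pi)⁻¹ : ℝ) : ℂ) * Phi T α₁ α₂ z)
          = Complex.exp ((z.arg / 2 : ℝ) * Complex.I) +
            ((lam * T * (2 * Real.pi)⁻¹ : ℝ) : ℂ) *
            (Complex.exp ((z.arg / 2 : ℝ) * Complex.I) * Phi T α₁ α₂ z) by
        rw [← hcast]; push_cast; ring]
      rw [Complex.add_re, Complex.re_ofReal_mul, Complex.exp_ofReal_mul_I_re]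
    rw [hre]
    nlinarith [mul_le_mul_of_nonneg_left hre_ge hk.le, hcpos.le]
  have hD0 : 0 < ‖1 + (lam : ℂ) * T * (((2 * Real.pi)⁻¹ : ℝ) : ℂ) *
      Phi T α₁ α₂ z‖ := by
    refine lt_of_lt_of_le ?_ habsD
    positivity
  -- final computation
  simp only [one_div]
  rw [norm_div, Complex.norm_real, Real.norm_eq_abs, abs_of_pos hlam]
  have hP0 : (0 : ℝ) < max ‖z‖ 1 ^ (1 - (max α₁ α₂)⁻¹) :=
    Real.rpow_pos_of_pos hM0 _
  have hPinv : max ‖z‖ 1 ^ ((max α₁ α₂)⁻¹ - 1)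
      = (max ‖z‖ 1 ^ (1 - (max α₁ α₂)⁻¹))⁻¹ := by
    rw [← Real.rpow_neg hM0.le, show -(1 - (max α₁ α₂)⁻¹) = (max α₁ α₂)⁻¹ - 1 by ring]
  rw [hPinv] at hJr_ge
  have hstep : lam * T * (2 * Real.pi)⁻¹ *
      (16⁻¹ * ((max ‖z‖ 1 ^ (1 - (max α₁ α₂)⁻¹))⁻¹ *
        ∫ v : ℝ, (1 + T * |v| ^ α₁ + T * |v| ^ α₂)⁻¹)) ≤
      ‖1 + (lam : ℂ) * T * (((2 * Real.pi)⁻¹ : ℝ) : ℂ) * Phi T α₁ α₂ z‖ := by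
    refine le_trans ?_ habsD
    have hnn : (0:ℝ) ≤ (max ‖z‖ 1 ^ (1 - (max α₁ α₂)⁻¹))⁻¹ *
        ∫ v : ℝ, (1 + T * |v| ^ α₁ + T * |v| ^ α₂)⁻¹ := by positivity
    exact mul_le_mul_of_nonneg_left
      (mul_le_mul hcos16 hJr_ge hnn hcpos.le) hk.le
  calc lam / ‖1 + (lam : ℂ) * T * (((2 * Real.pi)⁻¹ : ℝ) : ℂ) * Phi T α₁ α₂ z‖
      ≤ lam / (lam * T * (2 * Real.pi)⁻¹ *
          (16⁻¹ * ((max ‖z‖ 1 ^ (1 - (max α₁ α₂)⁻¹))⁻¹ *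
            ∫ v : ℝ, (1 + T * |v| ^ α₁ + T * |v| ^ α₂)⁻¹))) := by
        apply div_le_div_of_nonneg_left hlam.le ?_ hstep
        positivity
    _ = 32 * Real.pi / T * (∫ v : ℝ, (1 + T * |v| ^ α₁ + T * |v| ^ α₂)⁻¹)⁻¹ *
          max ‖z‖ 1 ^ (1 - (max α₁ α₂)⁻¹) := by
        exact alg_aux lam T Real.pi _ _ hlam.ne' hT.ne' hπ0.ne' hP0.ne' hI1pos.ne'
end
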